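/- Let ‖·‖ be any norm on ℝ^d and let a_1, …, a_k be points on the unit sphere S(0,1) = {ξ : ‖ξ‖ = 1} such that S(0,1) is contained in the union of the closed balls B̄(a_i, 1), i = 1, …, k. Set Γ = {0, a_1, …, a_k}. Then the open Voronoi cell V^o_0(Γ) is contained in the closed unit ball B̄(0, 1), and its d-dimensional Lebesgue measure is strictly positive. -/
import Mathlib


open MeasureTheory
open scoped ENNReal

/-- The open Voronoi cell of `x` in the grid `Γ`:
points strictly closer to `x` than to any other point of `Γ`. -/
def openVoronoiCell {E : Type*} [NormedAddCommGroup E] (Γ : Set E) (x : E) : Set E :=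
  {ξ | ∀ y ∈ Γ, y ≠ x → ‖ξ - x‖ < ‖ξ - y‖}

/-- for any norm on `ℝ^d` (a finite-dimensional real normed space), if
`a_1, …, a_k` lie on the unit sphere and the unit sphere is covered by the closed unit balls
`B̄(a_i, 1)`, then for `Γ = {0, a_1, …, a_k}` the open Voronoi cell of `0` is contained in the
closed unit ball and has strictly positive Lebesgue (Haar) measure. -/
theorem stmt2 {E : Type*} [NormedAddCommGroup E] [NormedSpace ℝ E]
    [FiniteDimensional ℝ E] [MeasurableSpace E] [BorelSpace E]
    (k : ℕ) (a : Fin k → E) (ha : ∀ i, a i ∈ Metric.sphere (0 : E) 1)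
    (hcov : Metric.sphere (0 : E) 1 ⊆ ⋃ i, Metric.closedBall (a i) 1)
    (Γ : Set E) (hΓ : Γ = insert (0 : E) (Set.range a)) :
    openVoronoiCell Γ 0 ⊆ Metric.closedBall (0 : E) 1 ∧
      0 < MeasureTheory.Measure.addHaar (openVoronoiCell Γ 0) := by
  constructor
  · intro ξ hξ
    simp only [Metric.mem_closedBall, dist_zero_right]
    by_contra h
    push_neg at h
    have hξpos : (0 : ℝ) < ‖ξ‖ := lt_trans one_pos h
    set u : E := ‖ξ‖⁻¹ • ξ with hu_def
    have hu : ‖u‖ = 1 := by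
      simp [hu_def, norm_smul, abs_of_pos (inv_pos.2 hξpos),
        inv_mul_cancel₀ hξpos.ne']
    have husphere : u ∈ Metric.sphere (0 : E) 1 := by
      simp [Metric.mem_sphere, dist_zero_right, hu]
    obtain ⟨_, ⟨i, rfl⟩, hi⟩ := hcov husphere
    have hiball : ‖u - a i‖ ≤ 1 := by
      simpa [dist_eq_norm] using hi
    have hai : a i ≠ 0 := by
      intro h0
      have := ha i
      simp [h0] at this
    have haiΓ : a i ∈ Γ := by
      rw [hΓ]; exact Set.mem_insert_of_mem _ ⟨i, rfl⟩
    have hlt : ‖ξ - 0‖ < ‖ξ - a i‖ := hξ (a i) haiΓ hai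
    have hdiff : ‖ξ - u‖ = ‖ξ‖ - 1 := by
      have : ξ - u = (1 - ‖ξ‖⁻¹) • ξ := by
        rw [hu_def, sub_smul, one_smul]
      rw [this, norm_smul, Real.norm_eq_abs,
        abs_of_nonneg (by
          have : ‖ξ‖⁻¹ < 1 := inv_lt_one_of_one_lt₀ h
          linarith)]
      field_simp
    have : ‖ξ - a i‖ ≤ ‖ξ‖ := by
      calc ‖ξ - a i‖ = ‖(ξ - u) + (u - a i)‖ := by rw [sub_add_sub_cancel]
        _ ≤ ‖ξ - u‖ + ‖u - a i‖ := norm_add_le _ _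
        _ ≤ (‖ξ‖ - 1) + 1 := by rw [hdiff]; linarith
        _ = ‖ξ‖ := by ring
    rw [sub_zero] at hlt
    linarith
  · have hsub : Metric.ball (0 : E) (1/2) ⊆ openVoronoiCell Γ 0 := by
      intro ξ hξ
      have hξn : ‖ξ‖ < 1/2 := by simpa [dist_zero_right] using hξ
      intro y hy hne
      rw [hΓ] at hy
      rcases hy with rfl | ⟨i, rfl⟩
      · exact absurd rfl hne
      · have hai : ‖a i‖ = 1 := by simpa [dist_zero_right] using ha i
        have : (1 : ℝ) - ‖ξ‖ ≤ ‖ξ - a i‖ := by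
          have := norm_sub_norm_le (a i) ξ
          rw [hai] at this
          calc (1 : ℝ) - ‖ξ‖ ≤ ‖a i - ξ‖ := this
            _ = ‖ξ - a i‖ := norm_sub_rev _ _
        rw [sub_zero]
        linarith
    calc (0 : ℝ≥0∞) < MeasureTheory.Measure.addHaar (Metric.ball (0 : E) (1/2)) :=
          Metric.measure_ball_pos _ _ (by norm_num)
      _ ≤ _ := measure_mono hsub
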